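/- For every m ≥ 0, every subset A ⊆ V_m, and all x, y ∈ A with x ∼_m y, one has (5/3)^m ≤ c^A_{x,y} ≤ c^{\{x,y\}}_{x,y} ≤ 4·(5/3)^m, where c^{\{x,y\}}_{x,y} is the conductance for the two-point set {x,y} (i.e. the reciprocal 1/R(x,y) of the effective resistance between x and y). -/

import Mathlib

open scoped BigOperators
open scoped Pointwise

noncomputable section

namespace SGPaper

/-- The three corners of the Sierpinski gasket:
`q₀ = (1/2, √3/2)`, `q₁ = (0,0)`, `q₂ = (1,0)`. -/
def q : Fin 3 → ℝ × ℝ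
  | 0 => (1 / 2, Real.sqrt 3 / 2)
  | 1 => (0, 0)
  | 2 => (1, 0)

/-- The contraction map towards corner `i`: `F_i(x) = (x + q_i)/2`. -/
def Fmap (i : Fin 3) (x : ℝ × ℝ) : ℝ × ℝ := (2⁻¹ : ℝ) • (x + q i)

/-- `Fword w = F_{w₁} ∘ ⋯ ∘ F_{w_m}` for the word `w = w₁⋯w_m`. -/
def Fword (w : List (Fin 3)) : ℝ × ℝ → ℝ × ℝ :=
  w.foldr (fun i f => Fmap i ∘ f) id

/-- The level-`m` vertex set of the Sierpinski gasket:
`V_m = ⋃_{|w| = m} F_w({q₀, q₁, q₂})`. -/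
def V (m : ℕ) : Set (ℝ × ℝ) :=
  {x | ∃ w : List (Fin 3), w.length = m ∧ ∃ i : Fin 3, x = Fword w (q i)}

/-- `x` and `y` are `m`-neighbors: they are distinct and belong to a common
level-`m` cell `F_w({q₀, q₁, q₂})`. -/
def Nbr (m : ℕ) (x y : ℝ × ℝ) : Prop :=
  x ≠ y ∧ ∃ w : List (Fin 3), w.length = m ∧
    (∃ i : Fin 3, x = Fword w (q i)) ∧ (∃ j : Fin 3, y = Fword w (q j))

/-- The value `(u x - u y)²` on the unordered pair `{x, y}`. -/
def edgeVal (u : ℝ × ℝ → ℝ) : Sym2 (ℝ × ℝ) → ℝ :=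
  Sym2.lift ⟨fun x y => (u x - u y) ^ 2, fun _ _ => by ring⟩

/-- The unordered pair `e` is an edge of the level-`m` graph `Γ_m`. -/
def IsEdge (m : ℕ) (e : Sym2 (ℝ × ℝ)) : Prop :=
  ∃ x y : ℝ × ℝ, Nbr m x y ∧ e = s(x, y)

/-- The level-`m` graph energy: `E_m(u) = (5/3)^m Σ (u x − u y)²`, the sum being over
unordered `m`-neighbor pairs `{x, y}` (a finite set, so `tsum` is the honest sum). -/
def Energy (m : ℕ) (u : ℝ × ℝ → ℝ) : ℝ :=
  (5 / 3 : ℝ) ^ m * ∑' e : {e : Sym2 (ℝ × ℝ) // IsEdge m e}, edgeVal u e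

/-- `Q_E(v)`: minimal level-`m` energy among functions `u : V_m → ℝ` agreeing
with `v` on `E` (the minimum is attained, so it equals this infimum). -/
def Q (m : ℕ) (E : Set (ℝ × ℝ)) (v : ℝ × ℝ → ℝ) : ℝ :=
  sInf {r | ∃ u : ℝ × ℝ → ℝ, (∀ x ∈ E, u x = v x) ∧ r = Energy m u}

/-- Indicator function of the point `z`. -/
def ind (z : ℝ × ℝ) : ℝ × ℝ → ℝ := fun t => if t = z then 1 else 0

/-- The conductance `c^E_{x,y} = (Q_E(𝟙_x) + Q_E(𝟙_y) − Q_E(𝟙_x + 𝟙_y))/2`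
between `x, y ∈ E`, computed at level `m`. -/
def cond (m : ℕ) (E : Set (ℝ × ℝ)) (x y : ℝ × ℝ) : ℝ :=
  (Q m E (ind x) + Q m E (ind y) - Q m E (ind x + ind y)) / 2

/-! ### Basic edge value lemmas -/

@[simp] lemma edgeVal_mk (u : ℝ × ℝ → ℝ) (a b : ℝ × ℝ) :
    edgeVal u s(a, b) = (u a - u b) ^ 2 := rfl

lemma edgeVal_nonneg (u : ℝ × ℝ → ℝ) (e : Sym2 (ℝ × ℝ)) : 0 ≤ edgeVal u e := by
  induction e using Sym2.ind with
  | _ a b => simp only [edgeVal_mk]; positivity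

/-! ### The triangular lattice -/

/-- Lattice embedding. -/
def L (t : ℕ × ℕ) : ℝ × ℝ :=
  ((t.1 : ℝ) + (t.2 : ℝ) / 2, (t.2 : ℝ) * (Real.sqrt 3 / 2))

lemma L_add (s t : ℕ × ℕ) : L (s + t) = L s + L t := by
  simp only [L, Prod.fst_add, Prod.snd_add, Prod.mk_add_mk, Prod.mk.injEq]
  push_cast; exact ⟨by ring, by ring⟩

lemma L_nsmul (n : ℕ) (t : ℕ × ℕ) : L (n • t) = (n : ℝ) • L t := by
  simp only [L, Prod.smul_fst, Prod.smul_snd, smul_eq_mul, Prod.smul_mk, Prod.mk.injEq]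
  push_cast; exact ⟨by ring, by ring⟩

lemma sqrt3_pos : 0 < Real.sqrt 3 := Real.sqrt_pos.mpr (by norm_num)

lemma L_inj : Function.Injective L := by
  rintro ⟨a, b⟩ ⟨c, d⟩ h
  simp only [L, Prod.mk.injEq] at h
  obtain ⟨h1, h2⟩ := h
  have hbd : (b : ℝ) = d := by
    have h3 : (Real.sqrt 3 / 2) ≠ 0 := ne_of_gt (by have := sqrt3_pos; positivity)
    exact mul_right_cancel₀ h3 h2
  have : (a : ℝ) = c := by linarith
  have hb : b = d := by exact_mod_cast hbd
  have ha : a = c := by exact_mod_cast this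
  simp [ha, hb]

/-- Scaled lattice point: the actual vertex in the plane. -/
def Pt (m : ℕ) (t : ℕ × ℕ) : ℝ × ℝ := ((2 : ℝ) ^ m)⁻¹ • L t

lemma Pt_inj (m : ℕ) : Function.Injective (Pt m) := by
  intro s t h
  apply L_inj
  have h2 : ((2:ℝ) ^ m) ≠ 0 := by positivity
  have := congrArg (fun z => ((2:ℝ) ^ m) • z) h
  simpa [Pt, smul_smul, mul_inv_cancel₀ h2] using this

/-- The lattice offsets of the three corners. -/
def vv : Fin 3 → ℕ × ℕ
  | 0 => (0, 1)
  | 1 => (0, 0)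
  | 2 => (1, 0)

lemma q_eq (i : Fin 3) : q i = L (vv i) := by
  fin_cases i <;> simp [q, vv, L]

lemma vv_inj : Function.Injective vv := by
  intro i j h
  fin_cases i <;> fin_cases j <;> simp_all [vv, Prod.ext_iff]

/-- Lattice base point of the cell of a word. -/
def base : List (Fin 3) → ℕ × ℕ
  | [] => (0, 0)
  | (i :: w) => 2 ^ w.length • vv i + base w

lemma Fword_eq (w : List (Fin 3)) (p : ℕ × ℕ) :
    Fword w (Pt 0 p) = Pt w.length (base w + p) := by
  induction w with
  | nil => simp [Fword, base, Pt]; congr 1; ext <;> simp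
  | cons i w ih =>
    have : Fword (i :: w) (Pt 0 p) = Fmap i (Fword w (Pt 0 p)) := rfl
    rw [this, ih]
    have h2 : ((2:ℝ) ^ w.length) ≠ 0 := by positivity
    rw [Prod.ext_iff]
    constructor <;>
    · simp only [Fmap, Pt, base, List.length_cons, q_eq, L_add, L_nsmul,
        Prod.smul_fst, Prod.smul_snd, Prod.fst_add, Prod.snd_add, smul_eq_mul, pow_succ]
      field_simp
      push_cast
      ring

lemma Fword_q_eq (w : List (Fin 3)) (i : Fin 3) :
    Fword w (q i) = Pt w.length (base w + vv i) := by
  have : q i = Pt 0 (vv i) := by simp [Pt, q_eq]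
  rw [this, Fword_eq]


/-! ### The finite set of cell base points -/

def baseFinset : ℕ → Finset (ℕ × ℕ)
  | 0 => {(0, 0)}
  | (m + 1) => (Finset.univ : Finset (Fin 3)).biUnion
      (fun i => (baseFinset m).image (fun t => 2 ^ m • vv i + t))

lemma mem_baseFinset {m : ℕ} {t : ℕ × ℕ} :
    t ∈ baseFinset m ↔ ∃ w : List (Fin 3), w.length = m ∧ base w = t := by
  induction m generalizing t with
  | zero =>
    simp only [baseFinset, Finset.mem_singleton]
    constructor
    · rintro rfl; exact ⟨[], rfl, rfl⟩
    · rintro ⟨w, hw, hb⟩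
      rw [List.length_eq_zero_iff] at hw; subst hw; simpa [base] using hb.symm
  | succ m ih =>
    simp only [baseFinset, Finset.mem_biUnion, Finset.mem_image, Finset.mem_univ, true_and]
    constructor
    · rintro ⟨i, s, hs, rfl⟩
      obtain ⟨w, hw, rfl⟩ := ih.mp hs
      exact ⟨i :: w, by simp [hw], by simp [base, hw]⟩
    · rintro ⟨w, hw, rfl⟩
      match w with
      | i :: w =>
        have hw' : w.length = m := by simpa using hw
        exact ⟨i, base w, ih.mpr ⟨w, hw', rfl⟩, by simp [base, hw']⟩

lemma baseFinset_sum_lt {m : ℕ} {t : ℕ × ℕ} (ht : t ∈ baseFinset m) :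
    t.1 + t.2 < 2 ^ m := by
  induction m generalizing t with
  | zero => simp only [baseFinset, Finset.mem_singleton] at ht; subst ht; norm_num
  | succ m ih =>
    simp only [baseFinset, Finset.mem_biUnion, Finset.mem_image, Finset.mem_univ, true_and] at ht
    obtain ⟨i, s, hs, rfl⟩ := ht
    have := ih hs
    fin_cases i <;> simp [vv, pow_succ] <;> omega

/-- Structure of membership at level `m+1`. -/
lemma mem_baseFinset_succ {m : ℕ} {t : ℕ × ℕ} :
    t ∈ baseFinset (m + 1) ↔
      (∃ s ∈ baseFinset m, t = (s.1, s.2 + 2 ^ m)) ∨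
      (∃ s ∈ baseFinset m, t = s) ∨
      (∃ s ∈ baseFinset m, t = (s.1 + 2 ^ m, s.2)) := by
  simp only [baseFinset, Finset.mem_biUnion, Finset.mem_univ, true_and, Finset.mem_image]
  constructor
  · rintro ⟨i, s, hs, rfl⟩
    fin_cases i
    · exact Or.inl ⟨s, hs, by simp [vv, Prod.ext_iff]; omega⟩
    · exact Or.inr (Or.inl ⟨s, hs, by simp [vv, Prod.ext_iff]⟩)
    · exact Or.inr (Or.inr ⟨s, hs, by simp [vv, Prod.ext_iff]; omega⟩)
  · rintro (⟨s, hs, he⟩ | ⟨s, hs, he⟩ | ⟨s, hs, he⟩)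
    · exact ⟨0, s, hs, by rw [he]; simp [vv, Prod.ext_iff]; omega⟩
    · exact ⟨1, s, hs, by rw [he]; simp [vv, Prod.ext_iff]⟩
    · exact ⟨2, s, hs, by rw [he]; simp [vv, Prod.ext_iff]; omega⟩

lemma stripX {m : ℕ} {p : ℕ × ℕ} (hp : p ∈ baseFinset (m + 1)) (h1 : 2 ^ m ≤ p.1) :
    (p.1 - 2 ^ m, p.2) ∈ baseFinset m := by
  rcases mem_baseFinset_succ.mp hp with ⟨s, hs, he⟩ | ⟨s, hs, he⟩ | ⟨s, hs, he⟩
  · have := baseFinset_sum_lt hs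
    rw [Prod.ext_iff] at he; simp at he; omega
  · have := baseFinset_sum_lt hs
    rw [he] at h1 ⊢; omega
  · have : (p.1 - 2 ^ m, p.2) = s := by
      rw [Prod.ext_iff] at he ⊢; simp at he ⊢; omega
    exact this ▸ hs

lemma stripY {m : ℕ} {p : ℕ × ℕ} (hp : p ∈ baseFinset (m + 1)) (h2 : 2 ^ m ≤ p.2) :
    (p.1, p.2 - 2 ^ m) ∈ baseFinset m := by
  rcases mem_baseFinset_succ.mp hp with ⟨s, hs, he⟩ | ⟨s, hs, he⟩ | ⟨s, hs, he⟩
  · have : (p.1, p.2 - 2 ^ m) = s := by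
      rw [Prod.ext_iff] at he ⊢; simp at he ⊢; omega
    exact this ▸ hs
  · have := baseFinset_sum_lt hs
    rw [he] at h2 ⊢; omega
  · have := baseFinset_sum_lt hs
    rw [Prod.ext_iff] at he; simp at he; omega

lemma keepMid {m : ℕ} {p : ℕ × ℕ} (hp : p ∈ baseFinset (m + 1))
    (h1 : p.1 < 2 ^ m) (h2 : p.2 < 2 ^ m) : p ∈ baseFinset m := by
  rcases mem_baseFinset_succ.mp hp with ⟨s, hs, he⟩ | ⟨s, hs, he⟩ | ⟨s, hs, he⟩
  · rw [Prod.ext_iff] at he; simp at he; omega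
  · exact he ▸ hs
  · rw [Prod.ext_iff] at he; simp at he; omega

/-- Key combinatorial fact: the three lattice points `p`, `p - e₁`, `p - e₂`
cannot all be base points of level-`m` cells. -/
lemma no_three (m : ℕ) : ∀ a b : ℕ,
    ¬(((a + 1, b + 1) ∈ baseFinset m) ∧ ((a, b + 1) ∈ baseFinset m) ∧
      ((a + 1, b) ∈ baseFinset m)) := by
  induction m with
  | zero =>
    intro a b h
    simp only [baseFinset, Finset.mem_singleton, Prod.mk.injEq] at h
    omega
  | succ m ih =>
    intro a b h
    obtain ⟨h1, h2, h3⟩ := h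
    have hNpos : 0 < 2 ^ m := pow_pos (by norm_num) m
    by_cases hA : 2 ^ m ≤ a
    · -- all letters 2: strip first coordinate
      have g1 := stripX h1 (by simpa using by omega)
      have g2 := stripX h2 (by simpa using hA)
      have g3 := stripX h3 (by simpa using by omega)
      refine ih (a - 2 ^ m) b ⟨?_, ?_, ?_⟩
      · have : ((a + 1 : ℕ), b + 1).1 - 2 ^ m = (a - 2 ^ m) + 1 := by simp; omega
        simpa [this] using g1
      · simpa using g2
      · have : ((a + 1 : ℕ), b).1 - 2 ^ m = (a - 2 ^ m) + 1 := by simp; omega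
        simpa [this] using g3
    · by_cases hB : 2 ^ m ≤ b
      · have g1 := stripY h1 (by simpa using by omega)
        have g2 := stripY h2 (by simpa using by omega)
        have g3 := stripY h3 (by simpa using hB)
        refine ih a (b - 2 ^ m) ⟨?_, ?_, ?_⟩
        · have : ((a + 1 : ℕ), b + 1).2 - 2 ^ m = (b - 2 ^ m) + 1 := by simp; omega
          simpa [this] using g1
        · have : ((a : ℕ), b + 1).2 - 2 ^ m = (b - 2 ^ m) + 1 := by simp; omega
          simpa [this] using g2
        · simpa using g3
      · push_neg at hA hB
        by_cases haN : a + 1 = 2 ^ m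
        · -- look at (a, b+1)
          by_cases hbN : b + 1 < 2 ^ m
          · have := baseFinset_sum_lt (keepMid h2 (by simp; omega) (by simpa using hbN))
            simp at this; omega
          · -- b + 1 = 2^m, so (a+1, b+1) has too large a sum
            have := baseFinset_sum_lt h1
            simp [pow_succ] at this; omega
        · by_cases hbN : b + 1 = 2 ^ m
          · have := baseFinset_sum_lt (keepMid h3 (by simp; omega) (by simp; omega))
            simp at this; omega
          · have g1 := keepMid h1 (by simp; omega) (by simp; omega)
            have g2 := keepMid h2 (by simp; omega) (by simp; omega)
            have g3 := keepMid h3 (by simp; omega) (by simp; omega)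
            exact ih a b ⟨g1, g2, g3⟩

/-! ### At most two cells meet at a point -/

/-- Every lattice point is a corner of at most two level-`m` cells. -/
lemma two_cells (m : ℕ) (p : ℕ × ℕ) :
    ∃ c1 c2 : (ℕ × ℕ) × Fin 3, ∀ (b : ℕ × ℕ) (i : Fin 3),
      b ∈ baseFinset m → b + vv i = p → (b, i) = c1 ∨ (b, i) = c2 := by
  obtain ⟨p1, p2⟩ := p
  -- candidates: i = 1 with b = p ; i = 2 with b = (p1-1, p2) ; i = 0 with b = (p1, p2-1)
  have key : ∀ (b : ℕ × ℕ) (i : Fin 3), b + vv i = (p1, p2) →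
      (i = 1 ∧ b = (p1, p2)) ∨
      (i = 2 ∧ ∃ r, p1 = r + 1 ∧ b = (r, p2)) ∨
      (i = 0 ∧ ∃ s, p2 = s + 1 ∧ b = (p1, s)) := by
    intro b i hb
    fin_cases i <;> simp [vv, Prod.ext_iff] at hb
    · refine Or.inr (Or.inr ⟨rfl, b.2, ?_, ?_⟩)
      · omega
      · rw [Prod.ext_iff]; simp; omega
    · exact Or.inl ⟨rfl, by rw [Prod.ext_iff]; simp; omega⟩
    · refine Or.inr (Or.inl ⟨rfl, b.1, ?_, ?_⟩)
      · omega
      · rw [Prod.ext_iff]; simp; omega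
  match p1, p2 with
  | 0, 0 => exact ⟨((0,0), 1), ((0,0), 1), by
      intro b i hb he
      rcases key b i he with ⟨hi, hb'⟩ | ⟨hi, r, hr, hb'⟩ | ⟨hi, s, hs, hb'⟩
      · left; rw [hi, hb']
      · omega
      · omega⟩
  | 0, s + 1 => exact ⟨((0, s+1), 1), ((0, s), 0), by
      intro b i hb he
      rcases key b i he with ⟨hi, hb'⟩ | ⟨hi, r, hr, hb'⟩ | ⟨hi, s', hs, hb'⟩
      · left; rw [hi, hb']
      · omega
      · right; rw [hi, hb']; simp; omega⟩
  | r + 1, 0 => exact ⟨((r+1, 0), 1), ((r, 0), 2), by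
      intro b i hb he
      rcases key b i he with ⟨hi, hb'⟩ | ⟨hi, r', hr, hb'⟩ | ⟨hi, s, hs, hb'⟩
      · left; rw [hi, hb']
      · right; rw [hi, hb']; simp; omega
      · omega⟩
  | r + 1, s + 1 =>
    by_cases hmid : (r + 1, s + 1) ∈ baseFinset m
    · by_cases hx : (r, s + 1) ∈ baseFinset m
      · -- then (r+1, s) ∉ baseFinset m by no_three
        refine ⟨((r+1, s+1), 1), ((r, s+1), 2), ?_⟩
        intro b i hb he
        rcases key b i he with ⟨hi, hb'⟩ | ⟨hi, r', hr, hb'⟩ | ⟨hi, s', hs, hb'⟩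
        · left; rw [hi, hb']
        · right; rw [hi, hb']; simp; omega
        · exfalso
          have hb2 : b = (r + 1, s) := by rw [hb']; simp; omega
          exact no_three m r s ⟨hmid, hx, by rw [← hb2]; exact hb⟩
      · refine ⟨((r+1, s+1), 1), ((r+1, s), 0), ?_⟩
        intro b i hb he
        rcases key b i he with ⟨hi, hb'⟩ | ⟨hi, r', hr, hb'⟩ | ⟨hi, s', hs, hb'⟩
        · left; rw [hi, hb']
        · exfalso
          have hb2 : b = (r, s + 1) := by rw [hb']; simp; omega
          exact hx (hb2 ▸ hb)
        · right; rw [hi, hb']; simp; omega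
    · refine ⟨((r, s+1), 2), ((r+1, s), 0), ?_⟩
      intro b i hb he
      rcases key b i he with ⟨hi, hb'⟩ | ⟨hi, r', hr, hb'⟩ | ⟨hi, s', hs, hb'⟩
      · exfalso; exact hmid (hb' ▸ hb)
      · left; rw [hi, hb']; simp; omega
      · right; rw [hi, hb']; simp; omega

/-! ### The finite edge set -/

def ES (m : ℕ) : Finset (Sym2 (ℝ × ℝ)) :=
  ((baseFinset m) ×ˢ ((Finset.univ : Finset (Fin 3 × Fin 3)).filter (fun ij => ij.1 ≠ ij.2))).image
    (fun bij => s(Pt m (bij.1 + vv bij.2.1), Pt m (bij.1 + vv bij.2.2)))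

lemma mem_ES {m : ℕ} {e : Sym2 (ℝ × ℝ)} :
    e ∈ ES m ↔ ∃ b ∈ baseFinset m, ∃ i j : Fin 3, i ≠ j ∧
      e = s(Pt m (b + vv i), Pt m (b + vv j)) := by
  simp only [ES, Finset.mem_image]
  constructor
  · rintro ⟨bij, hmem, rfl⟩
    simp only [Finset.mem_product, Finset.mem_filter, Finset.mem_univ, true_and] at hmem
    exact ⟨bij.1, hmem.1, bij.2.1, bij.2.2, hmem.2, rfl⟩
  · rintro ⟨b, hb, i, j, hij, rfl⟩
    exact ⟨(b, (i, j)), by simp [Finset.mem_product, Finset.mem_filter, hb, hij], rfl⟩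

lemma isEdge_iff {m : ℕ} {e : Sym2 (ℝ × ℝ)} : IsEdge m e ↔ e ∈ ES m := by
  constructor
  · rintro ⟨x, y, ⟨hxy, w, hw, ⟨i, rfl⟩, ⟨j, rfl⟩⟩, rfl⟩
    rw [mem_ES]
    refine ⟨base w, mem_baseFinset.mpr ⟨w, hw, rfl⟩, i, j, ?_, ?_⟩
    · intro hij; exact hxy (by rw [hij])
    · rw [Fword_q_eq, Fword_q_eq, hw]
  · rw [mem_ES]
    rintro ⟨b, hb, i, j, hij, rfl⟩
    obtain ⟨w, hw, rfl⟩ := mem_baseFinset.mp hb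
    refine ⟨Pt m (base w + vv i), Pt m (base w + vv j), ⟨?_, w, hw, ⟨i, ?_⟩, ⟨j, ?_⟩⟩, rfl⟩
    · intro hcon
      have := L_inj (by
        have h2 : ((2:ℝ) ^ m) ≠ 0 := by positivity
        have := congrArg (fun z => ((2:ℝ) ^ m) • z) hcon
        simpa [Pt, smul_smul, mul_inv_cancel₀ h2] using this)
      have : vv i = vv j := by
        rw [Prod.ext_iff] at this ⊢; simp at this; constructor <;> omega
      exact hij (vv_inj this)
    · rw [Fword_q_eq, hw]
    · rw [Fword_q_eq, hw]

/-- The energy is an honest finite sum over the edge finset. -/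
lemma Energy_eq (m : ℕ) (u : ℝ × ℝ → ℝ) :
    Energy m u = (5 / 3 : ℝ) ^ m * ∑ e ∈ ES m, edgeVal u e := by
  unfold Energy
  congr 1
  have hset : {e : Sym2 (ℝ × ℝ) | IsEdge m e} = (↑(ES m) : Set (Sym2 (ℝ × ℝ))) := by
    ext e; simpa [Set.mem_setOf_eq] using (isEdge_iff (m := m) (e := e))
  calc ∑' e : {e : Sym2 (ℝ × ℝ) // IsEdge m e}, edgeVal u e
      = ∑' e : (↑(ES m) : Set (Sym2 (ℝ × ℝ))), edgeVal u e := by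
        exact tsum_congr_set_coe (edgeVal u) hset
    _ = ∑ e ∈ ES m, edgeVal u e := by
        exact Finset.tsum_subtype (ES m) (edgeVal u)
/-! ### Basic properties of the energy -/

lemma Kpos (m : ℕ) : (0:ℝ) < (5 / 3 : ℝ) ^ m := by positivity

lemma Energy_nonneg (m : ℕ) (u : ℝ × ℝ → ℝ) : 0 ≤ Energy m u := by
  rw [Energy_eq]
  apply mul_nonneg (le_of_lt (Kpos m))
  exact Finset.sum_nonneg fun e _ => edgeVal_nonneg u e

lemma Energy_const (m : ℕ) (c : ℝ) : Energy m (fun _ => c) = 0 := by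
  rw [Energy_eq]
  have : ∀ e ∈ ES m, edgeVal (fun _ => c) e = 0 := by
    intro e _
    induction e using Sym2.ind with
    | _ a b => simp
  rw [Finset.sum_congr rfl this]
  simp

lemma Energy_add_const (m : ℕ) (u : ℝ × ℝ → ℝ) (c : ℝ) :
    Energy m (fun t => u t + c) = Energy m u := by
  rw [Energy_eq, Energy_eq]
  congr 1
  apply Finset.sum_congr rfl
  intro e _
  induction e using Sym2.ind with
  | _ a b => simp only [edgeVal_mk]; ring

lemma Energy_smul (m : ℕ) (α : ℝ) (u : ℝ × ℝ → ℝ) :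
    Energy m (α • u) = α ^ 2 * Energy m u := by
  rw [Energy_eq, Energy_eq]
  have h : ∑ e ∈ ES m, edgeVal (α • u) e = α ^ 2 * ∑ e ∈ ES m, edgeVal u e := by
    rw [Finset.mul_sum]
    apply Finset.sum_congr rfl
    intro e _
    induction e using Sym2.ind with
    | _ a b => simp only [edgeVal_mk, Pi.smul_apply, smul_eq_mul]; ring
  rw [h]; ring

lemma Energy_parallelogram (m : ℕ) (u w : ℝ × ℝ → ℝ) :
    Energy m (u + w) + Energy m (u - w) = 2 * Energy m u + 2 * Energy m w := by
  simp only [Energy_eq]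
  have h : ∑ e ∈ ES m, edgeVal (u + w) e + ∑ e ∈ ES m, edgeVal (u - w) e =
      2 * ∑ e ∈ ES m, edgeVal u e + 2 * ∑ e ∈ ES m, edgeVal w e := by
    rw [Finset.mul_sum, Finset.mul_sum, ← Finset.sum_add_distrib, ← Finset.sum_add_distrib]
    apply Finset.sum_congr rfl
    intro e _
    induction e using Sym2.ind with
    | _ a b => simp only [edgeVal_mk, Pi.add_apply, Pi.sub_apply]; ring
  linear_combination ((5/3:ℝ)^m) * h

lemma Energy_minmax (m : ℕ) (a b : ℝ × ℝ → ℝ) :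
    Energy m (fun t => max (a t) (b t)) + Energy m (fun t => min (a t) (b t)) ≤
      Energy m a + Energy m b := by
  simp only [Energy_eq, ← mul_add]
  apply mul_le_mul_of_nonneg_left _ (le_of_lt (Kpos m))
  rw [← Finset.sum_add_distrib, ← Finset.sum_add_distrib]
  apply Finset.sum_le_sum
  intro e _
  induction e using Sym2.ind with
  | _ p r =>
    simp only [edgeVal_mk]
    rcases le_total (a p) (b p) with h1 | h1 <;> rcases le_total (a r) (b r) with h2 | h2 <;>
      simp [max_eq_right, max_eq_left, min_eq_left, min_eq_right, h1, h2] <;> nlinarith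

/-! ### Basic properties of `Q` -/

lemma Q_set_nonempty (m : ℕ) (E : Set (ℝ × ℝ)) (v : ℝ × ℝ → ℝ) :
    {r | ∃ u : ℝ × ℝ → ℝ, (∀ x ∈ E, u x = v x) ∧ r = Energy m u}.Nonempty :=
  ⟨Energy m v, v, fun _ _ => rfl, rfl⟩

lemma Q_set_bddBelow (m : ℕ) (E : Set (ℝ × ℝ)) (v : ℝ × ℝ → ℝ) :
    BddBelow {r | ∃ u : ℝ × ℝ → ℝ, (∀ x ∈ E, u x = v x) ∧ r = Energy m u} := by
  refine ⟨0, ?_⟩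
  rintro r ⟨u, _, rfl⟩
  exact Energy_nonneg m u

lemma Q_nonneg (m : ℕ) (E : Set (ℝ × ℝ)) (v : ℝ × ℝ → ℝ) : 0 ≤ Q m E v := by
  apply le_csInf (Q_set_nonempty m E v)
  rintro r ⟨u, _, rfl⟩
  exact Energy_nonneg m u

lemma Q_le_energy (m : ℕ) (E : Set (ℝ × ℝ)) (v u : ℝ × ℝ → ℝ) (h : ∀ x ∈ E, u x = v x) :
    Q m E v ≤ Energy m u :=
  csInf_le (Q_set_bddBelow m E v) ⟨u, h, rfl⟩

lemma Q_ge_of_forall (m : ℕ) (E : Set (ℝ × ℝ)) (v : ℝ × ℝ → ℝ) (r : ℝ)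
    (h : ∀ u : ℝ × ℝ → ℝ, (∀ x ∈ E, u x = v x) → r ≤ Energy m u) : r ≤ Q m E v := by
  apply le_csInf (Q_set_nonempty m E v)
  rintro s ⟨u, hu, rfl⟩
  exact h u hu

lemma Q_exists_near (m : ℕ) (E : Set (ℝ × ℝ)) (v : ℝ × ℝ → ℝ) {ε : ℝ} (hε : 0 < ε) :
    ∃ u : ℝ × ℝ → ℝ, (∀ x ∈ E, u x = v x) ∧ Energy m u < Q m E v + ε := by
  obtain ⟨r, hr, hlt⟩ := Real.lt_sInf_add_pos (Q_set_nonempty m E v) hε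
  obtain ⟨u, hu, rfl⟩ := hr
  exact ⟨u, hu, hlt⟩

lemma Q_congr (m : ℕ) (E : Set (ℝ × ℝ)) (v v' : ℝ × ℝ → ℝ) (h : ∀ x ∈ E, v x = v' x) :
    Q m E v = Q m E v' := by
  unfold Q
  congr 1
  ext r
  constructor <;> rintro ⟨u, hu, rfl⟩
  · exact ⟨u, fun x hx => (hu x hx).trans (h x hx), rfl⟩
  · exact ⟨u, fun x hx => (hu x hx).trans (h x hx).symm, rfl⟩

lemma Q_const (m : ℕ) (E : Set (ℝ × ℝ)) (c : ℝ) : Q m E (fun _ => c) = 0 := by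
  apply le_antisymm
  · have := Q_le_energy m E (fun _ => c) (fun _ => c) (fun _ _ => rfl)
    rwa [Energy_const] at this
  · exact Q_nonneg m E _

lemma Q_add_const (m : ℕ) (E : Set (ℝ × ℝ)) (v : ℝ × ℝ → ℝ) (c : ℝ) :
    Q m E (fun t => v t + c) = Q m E v := by
  unfold Q
  congr 1
  ext r
  constructor
  · rintro ⟨u, hu, rfl⟩
    refine ⟨fun t => u t - c, fun x hx => by show u x - c = v x; rw [hu x hx]; show v x + c - c = v x; ring, ?_⟩
    rw [show (fun t => u t - c) = (fun t => u t + (-c)) from by funext t; ring, Energy_add_const]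
  · rintro ⟨u, hu, rfl⟩
    refine ⟨fun t => u t + c, fun x hx => by show u x + c = v x + c; rw [hu x hx], ?_⟩
    rw [Energy_add_const]

lemma Q_smul (m : ℕ) (E : Set (ℝ × ℝ)) (α : ℝ) (v : ℝ × ℝ → ℝ) :
    Q m E (α • v) = α ^ 2 * Q m E v := by
  rcases eq_or_ne α 0 with rfl | hα
  · simp only [zero_smul, ne_eq, OfNat.ofNat_ne_zero, not_false_eq_true, zero_pow, zero_mul]
    have : (0 : ℝ × ℝ → ℝ) = (fun _ => (0:ℝ)) := rfl
    rw [this, Q_const]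
  · unfold Q
    have hset : {r | ∃ u : ℝ × ℝ → ℝ, (∀ x ∈ E, u x = (α • v) x) ∧ r = Energy m u} =
        ((α ^ 2) • ({r : ℝ | ∃ u : ℝ × ℝ → ℝ, (∀ x ∈ E, u x = v x) ∧ r = Energy m u}) : Set ℝ) := by
      ext r
      rw [Set.mem_smul_set]
      constructor
      · rintro ⟨u, hu, rfl⟩
        refine ⟨Energy m (α⁻¹ • u), ⟨α⁻¹ • u, fun x hx => ?_, rfl⟩, ?_⟩
        · simp only [Pi.smul_apply, smul_eq_mul, hu x hx]
          field_simp
        · show α ^ 2 • Energy m (α⁻¹ • u) = Energy m u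
          rw [smul_eq_mul, Energy_smul, ← mul_assoc]
          have h1 : α ^ 2 * α⁻¹ ^ 2 = 1 := by field_simp
          rw [h1, one_mul]
      · rintro ⟨r', ⟨u, hu, rfl⟩, rfl⟩
        refine ⟨α • u, fun x hx => by simp [hu x hx], ?_⟩
        show α ^ 2 • Energy m u = Energy m (α • u)
        rw [Energy_smul, smul_eq_mul]
    rw [hset]
    have h2 : (0:ℝ) ≤ α ^ 2 := sq_nonneg α
    rw [Real.sInf_smul_of_nonneg h2, smul_eq_mul]
/-! ### The quadratic form structure of `Q` -/

lemma Q_parallelogram (m : ℕ) (E : Set (ℝ × ℝ)) (f g : ℝ × ℝ → ℝ) :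
    Q m E (f + g) + Q m E (f - g) = 2 * Q m E f + 2 * Q m E g := by
  have hle : ∀ f g : ℝ × ℝ → ℝ,
      Q m E (f + g) + Q m E (f - g) ≤ 2 * Q m E f + 2 * Q m E g := by
    intro f g
    apply le_of_forall_pos_le_add
    intro ε hε
    obtain ⟨a, ha, hEa⟩ := Q_exists_near m E f (by positivity : (0:ℝ) < ε/4)
    obtain ⟨b, hb, hEb⟩ := Q_exists_near m E g (by positivity : (0:ℝ) < ε/4)
    have h1 : Q m E (f + g) ≤ Energy m (a + b) :=
      Q_le_energy m E _ _ (fun t ht => by simp [Pi.add_apply, ha t ht, hb t ht])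
    have h2 : Q m E (f - g) ≤ Energy m (a - b) :=
      Q_le_energy m E _ _ (fun t ht => by simp [Pi.sub_apply, ha t ht, hb t ht])
    have h3 := Energy_parallelogram m a b
    linarith
  apply le_antisymm
  · exact hle f g
  · have h := hle (f + g) (f - g)
    have e1 : (f + g) + (f - g) = (2:ℝ) • f := by funext t; simp [Pi.add_apply, Pi.sub_apply]; ring
    have e2 : (f + g) - (f - g) = (2:ℝ) • g := by funext t; simp [Pi.add_apply, Pi.sub_apply]; ring
    rw [e1, e2, Q_smul, Q_smul] at h
    norm_num at h
    linarith

/-- The polarization form associated with `Q`. -/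
def Bform (m : ℕ) (E : Set (ℝ × ℝ)) (f g : ℝ × ℝ → ℝ) : ℝ :=
  (Q m E (f + g) - Q m E f - Q m E g) / 2

lemma Bform_symm (m : ℕ) (E : Set (ℝ × ℝ)) (f g : ℝ × ℝ → ℝ) :
    Bform m E f g = Bform m E g f := by
  unfold Bform; rw [add_comm f g]; ring

lemma Bform_self (m : ℕ) (E : Set (ℝ × ℝ)) (f : ℝ × ℝ → ℝ) :
    Bform m E f f = Q m E f := by
  unfold Bform
  have e1 : f + f = (2:ℝ) • f := by funext t; simp [Pi.add_apply]; ring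
  rw [e1, Q_smul]
  ring

lemma Bform_add_left (m : ℕ) (E : Set (ℝ × ℝ)) (f g h : ℝ × ℝ → ℝ) :
    Bform m E (f + g) h = Bform m E f h + Bform m E g h := by
  have P1 := Q_parallelogram m E (f + h) (g + h)
  have P2 := Q_parallelogram m E (f + g + h) h
  have P3 := Q_parallelogram m E f g
  have e1 : (f + h) + (g + h) = (f + g + h) + h := by
    funext t; simp [Pi.add_apply]; ring
  have e2 : (f + h) - (g + h) = f - g := by
    funext t; simp [Pi.add_apply, Pi.sub_apply]
  have e3 : (f + g + h) - h = f + g := by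
    funext t; simp [Pi.add_apply, Pi.sub_apply]
  rw [e1, e2] at P1
  rw [e3] at P2
  unfold Bform
  linarith

lemma Bform_zero_left (m : ℕ) (E : Set (ℝ × ℝ)) (h : ℝ × ℝ → ℝ) :
    Bform m E 0 h = 0 := by
  unfold Bform
  have e1 : (0 : ℝ × ℝ → ℝ) + h = h := by funext t; simp
  have e2 : (0 : ℝ × ℝ → ℝ) = (fun _ => (0:ℝ)) := rfl
  rw [e1, e2, Q_const]
  ring

/-- Real homogeneity of the polarization form. -/
lemma Bform_smul_left (m : ℕ) (E : Set (ℝ × ℝ)) (α : ℝ) (f h : ℝ × ℝ → ℝ) :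
    Bform m E (α • f) h = α * Bform m E f h := by
  -- the additive map θ : α ↦ B(αf, h)
  have hadd : ∀ α β : ℝ, Bform m E ((α + β) • f) h =
      Bform m E (α • f) h + Bform m E (β • f) h := by
    intro α β
    have e1 : (α + β) • f = α • f + β • f := by
      funext t; simp [Pi.add_apply, Pi.smul_apply, add_mul]
    rw [e1, Bform_add_left]
  set θhom : ℝ →+ ℝ := AddMonoidHom.mk' (fun α => Bform m E (α • f) h)
    (by intro a b; exact hadd a b) with hθ
  -- two-sided bound |θ β| ≤ (β² Q f + Q h)/2
  have hbd : ∀ β : ℝ, |θhom β| ≤ (β ^ 2 * Q m E f + Q m E h) / 2 := by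
    intro β
    have hlow : ∀ γ : ℝ, -((γ ^ 2 * Q m E f + Q m E h) / 2) ≤ θhom γ := by
      intro γ
      have h0 : 0 ≤ Q m E (γ • f + h) := Q_nonneg m E _
      have : θhom γ = (Q m E (γ • f + h) - Q m E (γ • f) - Q m E h) / 2 := rfl
      rw [this, Q_smul]
      linarith
    have h1 := hlow β
    have h2 := hlow (-β)
    have hneg : θhom (-β) = -θhom β := map_neg θhom β
    rw [hneg] at h2
    rw [abs_le]
    constructor
    · linarith [h1]
    · have : (-β) ^ 2 = β ^ 2 := by ring
      rw [this] at h2; linarith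
  -- rational homogeneity
  have hrat : ∀ (r : ℚ) (β : ℝ), θhom ((r : ℝ) * β) = (r : ℝ) * θhom β := by
    intro r β
    have := map_ratCast_smul θhom ℝ ℝ r β
    simpa [smul_eq_mul] using this
  -- conclude real homogeneity
  have key : θhom α = α * θhom 1 := by
    by_contra hne
    set δ := |θhom α - α * θhom 1| with hδ
    have hδpos : 0 < δ := abs_pos.mpr (sub_ne_zero.mpr hne)
    set C := (Q m E f + Q m E h) / 2 with hC
    have hCnn : 0 ≤ C := by
      have := Q_nonneg m E f; have := Q_nonneg m E h
      positivity
    set D := C + |θhom 1| with hD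
    have hDnn : 0 ≤ D := by have := abs_nonneg (θhom 1); linarith
    obtain ⟨n0, hn0⟩ := exists_nat_gt (D / δ)
    set n : ℕ := n0 + 1 with hn_def
    have hn : D / δ < (n:ℝ) := by
      have : (n0:ℝ) < (n:ℝ) := by rw [hn_def]; push_cast; linarith
      linarith
    have hnpos : 0 < (n : ℝ) := by rw [hn_def]; positivity
    have hn1 : 1 ≤ (n:ℝ) := by
      rw [hn_def]; push_cast
      have : (0:ℝ) ≤ (n0:ℝ) := by positivity
      linarith
    -- pick a rational within 1/n² of α
    obtain ⟨r, hr⟩ := exists_rat_near α (by positivity : (0:ℝ) < 1 / (n:ℝ)^2)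
    have hsplit : θhom α - (r:ℝ) * θhom 1 = θhom (α - (r:ℝ)) := by
      have h1 : θhom ((r:ℝ)) = (r:ℝ) * θhom 1 := by
        have := hrat r 1; simpa using this
      rw [map_sub θhom α (r:ℝ), h1]
    have hscale : ∀ k : ℕ, (k:ℝ) * θhom (α - (r:ℝ)) = θhom ((k:ℝ) * (α - (r:ℝ))) := by
      intro k
      induction k with
      | zero => simp
      | succ k ih =>
        push_cast
        rw [add_mul, add_mul, one_mul, one_mul, map_add, ← ih]
    have hsmall : |θhom (α - (r:ℝ))| ≤ C / n := by
      have hb := hbd ((n:ℝ) * (α - (r:ℝ)))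
      rw [← hscale n, abs_mul, abs_of_pos hnpos] at hb
      have hsq : ((n:ℝ) * (α - (r:ℝ))) ^ 2 ≤ 1 := by
        have habs : |(n:ℝ) * (α - (r:ℝ))| ≤ 1 := by
          rw [abs_mul, abs_of_pos hnpos]
          calc (n:ℝ) * |α - (r:ℝ)| ≤ (n:ℝ) * (1 / (n:ℝ)^2) := by
                apply mul_le_mul_of_nonneg_left (le_of_lt hr) (le_of_lt hnpos)
            _ = 1 / (n:ℝ) := by field_simp
            _ ≤ 1 := by rw [div_le_one hnpos]; exact hn1
        calc ((n:ℝ) * (α - (r:ℝ))) ^ 2 = |(n:ℝ) * (α - (r:ℝ))| ^ 2 := by rw [sq_abs]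
          _ ≤ 1 ^ 2 := by apply pow_le_pow_left₀ (abs_nonneg _) habs
          _ = 1 := one_pow 2
      have hQf := Q_nonneg m E f
      have hQh := Q_nonneg m E h
      rw [le_div_iff₀ hnpos]
      have h5 : ((n:ℝ) * (α - (r:ℝ))) ^ 2 * Q m E f ≤ 1 * Q m E f := by
        apply mul_le_mul_of_nonneg_right hsq hQf
      have hterm : (((n:ℝ) * (α - (r:ℝ))) ^ 2 * Q m E f + Q m E h) / 2 ≤ C := by
        rw [hC]; linarith
      nlinarith [hb]
    have t3 : |(r:ℝ) * θhom 1 - α * θhom 1| ≤ |θhom 1| / (n:ℝ) := by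
      have e : (r:ℝ) * θhom 1 - α * θhom 1 = ((r:ℝ) - α) * θhom 1 := by ring
      rw [e, abs_mul]
      have h1 : |(r:ℝ) - α| ≤ 1 / (n:ℝ)^2 := by
        rw [abs_sub_comm]; exact le_of_lt hr
      have h2 : (1:ℝ) / (n:ℝ)^2 ≤ 1 / (n:ℝ) := by
        apply div_le_div_of_nonneg_left (by norm_num) hnpos
        calc (n:ℝ) = (n:ℝ) * 1 := by ring
          _ ≤ (n:ℝ) * (n:ℝ) := by apply mul_le_mul_of_nonneg_left hn1 (le_of_lt hnpos)
          _ = (n:ℝ)^2 := by ring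
      calc |(r:ℝ) - α| * |θhom 1| ≤ (1 / (n:ℝ)) * |θhom 1| := by
            apply mul_le_mul_of_nonneg_right (le_trans h1 h2) (abs_nonneg _)
        _ = |θhom 1| / (n:ℝ) := by ring
    have hfinal : δ ≤ D / n := by
      have e2 : D / n = C / n + |θhom 1| / (n:ℝ) := by rw [hD]; ring
      calc δ = |(θhom α - (r:ℝ) * θhom 1) + ((r:ℝ) * θhom 1 - α * θhom 1)| := by
            rw [hδ]; congr 1; ring
        _ ≤ |θhom α - (r:ℝ) * θhom 1| + |(r:ℝ) * θhom 1 - α * θhom 1| := abs_add_le _ _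
        _ ≤ C / n + |θhom 1| / (n:ℝ) := by
            rw [hsplit]
            exact add_le_add hsmall t3
        _ = D / n := e2.symm
    have hc1 : D / n < δ := by
      rw [div_lt_iff₀ hnpos]
      calc D = (D / δ) * δ := by field_simp
        _ < (n:ℝ) * δ := mul_lt_mul_of_pos_right hn hδpos
        _ = δ * (n:ℝ) := by ring
    linarith
  have h1 : θhom 1 = Bform m E f h := by
    show Bform m E ((1:ℝ) • f) h = Bform m E f h
    rw [one_smul]
  show θhom α = α * Bform m E f h
  rw [key, h1]
/-! ### Finite expansion of the quadratic form -/

lemma Bform_sum_left (m : ℕ) (E : Set (ℝ × ℝ)) {ι : Type*} (s : Finset ι)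
    (c : ι → ℝ) (F : ι → ℝ × ℝ → ℝ) (h : ℝ × ℝ → ℝ) :
    Bform m E (∑ t ∈ s, c t • F t) h = ∑ t ∈ s, c t * Bform m E (F t) h := by
  classical
  induction s using Finset.induction_on with
  | empty => simpa using Bform_zero_left m E h
  | insert _ _ hnotmem ih =>
    rw [Finset.sum_insert hnotmem, Finset.sum_insert hnotmem, Bform_add_left,
      Bform_smul_left, ih]

/-- Off-diagonal coefficients are nonpositive (Markov property via min/max). -/
lemma Bform_ind_nonpos (m : ℕ) (E : Set (ℝ × ℝ)) {s t : ℝ × ℝ}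
    (hs : s ∈ E) (ht : t ∈ E) (hst : s ≠ t) :
    Bform m E (ind s) (ind t) ≤ 0 := by
  have key : Q m E (ind s + ind t) ≤ Q m E (ind s) + Q m E (ind t) := by
    apply le_of_forall_pos_le_add
    intro ε hε
    obtain ⟨a, ha, hEa⟩ := Q_exists_near m E (ind s) (by positivity : (0:ℝ) < ε/2)
    obtain ⟨b, hb, hEb⟩ := Q_exists_near m E (ind t) (by positivity : (0:ℝ) < ε/2)
    have hadm : ∀ p ∈ E, (fun r => max (a r) (b r)) p = (ind s + ind t) p := by
      intro p hp
      have h1 : a p = ind s p := ha p hp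
      have h2 : b p = ind t p := hb p hp
      simp only [Pi.add_apply, h1, h2, ind]
      by_cases hps : p = s
      · subst hps
        rw [if_pos rfl, if_neg hst]
        norm_num
      · rw [if_neg hps]
        by_cases hpt : p = t
        · subst hpt; rw [if_pos rfl]; norm_num
        · rw [if_neg hpt]; norm_num
    have h1 : Q m E (ind s + ind t) ≤ Energy m (fun r => max (a r) (b r)) :=
      Q_le_energy m E _ _ hadm
    have h2 := Energy_minmax m a b
    have h3 := Energy_nonneg m (fun r => min (a r) (b r))
    linarith
  unfold Bform
  linarith

/-- **Crucial inequality**: any function with `v x = 1`, `v y = 0` has `Q`-energy at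
least the conductance `c^A_{x,y}`. -/
lemma cond_le_Q (m : ℕ) (A : Set (ℝ × ℝ)) (hfin : A.Finite) {x y : ℝ × ℝ}
    (hx : x ∈ A) (hy : y ∈ A) (hxy : x ≠ y) (v : ℝ × ℝ → ℝ)
    (hvx : v x = 1) (hvy : v y = 0) :
    cond m A x y ≤ Q m A v := by
  classical
  set A' := hfin.toFinset with hA'
  have hx' : x ∈ A' := hfin.mem_toFinset.mpr hx
  have hy' : y ∈ A' := hfin.mem_toFinset.mpr hy
  set Bst : (ℝ × ℝ) → (ℝ × ℝ) → ℝ := fun s t => Bform m A (ind s) (ind t) with hBst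
  -- v agrees with its A-truncation
  set vA : ℝ × ℝ → ℝ := ∑ t ∈ A', v t • ind t with hvA
  have hagree : ∀ p ∈ A, v p = vA p := by
    intro p hp
    have hp' : p ∈ A' := hfin.mem_toFinset.mpr hp
    rw [hvA]
    rw [Finset.sum_apply]
    have : ∀ t ∈ A', (v t • ind t) p = if p = t then v t else 0 := by
      intro t _
      simp only [Pi.smul_apply, smul_eq_mul, ind]
      split_ifs <;> ring
    rw [Finset.sum_congr rfl this, Finset.sum_ite_eq A' p v, if_pos hp']
  -- expansion of Q v as a double sum
  have hQv : Q m A v = ∑ s ∈ A', v s * ∑ t ∈ A', v t * Bst s t := by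
    rw [Q_congr m A v vA hagree, ← Bform_self m A vA]
    nth_rewrite 1 [hvA]
    rw [Bform_sum_left]
    apply Finset.sum_congr rfl
    intro s _
    congr 1
    rw [Bform_symm]
    nth_rewrite 1 [hvA]
    rw [Bform_sum_left]
    apply Finset.sum_congr rfl
    intro t _
    rw [Bform_symm]
  -- row sums vanish
  have hrow : ∀ s : ℝ × ℝ, s ∈ A' → ∑ t ∈ A', Bst s t = 0 := by
    intro s _
    have h1 : ∑ t ∈ A', Bst s t = ∑ t ∈ A', (1:ℝ) * Bform m A (ind t) (ind s) := by
      apply Finset.sum_congr rfl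
      intro t _
      rw [one_mul]
      exact Bform_symm m A (ind s) (ind t)
    rw [h1, ← Bform_sum_left m A A' (fun _ => (1:ℝ)) ind (ind s)]
    set oneA : ℝ × ℝ → ℝ := ∑ t ∈ A', (1:ℝ) • ind t with honeA
    have honev : ∀ p ∈ A, oneA p = 1 := by
      intro p hp
      have hp' : p ∈ A' := hfin.mem_toFinset.mpr hp
      rw [honeA, Finset.sum_apply]
      have : ∀ t ∈ A', ((1:ℝ) • ind t) p = if p = t then (1:ℝ) else 0 := by
        intro t _
        simp only [Pi.smul_apply, smul_eq_mul, one_mul, ind]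
      rw [Finset.sum_congr rfl this, Finset.sum_ite_eq A' p (fun _ => (1:ℝ)), if_pos hp']
    have hQone : Q m A oneA = 0 := by
      rw [Q_congr m A oneA (fun _ => 1) (fun p hp => by rw [honev p hp]), Q_const]
    have hQadd : Q m A (oneA + ind s) = Q m A (ind s) := by
      rw [Q_congr m A (oneA + ind s) (fun p => ind s p + 1)
        (fun p hp => by simp only [Pi.add_apply]; rw [honev p hp]; ring), Q_add_const]
    show Bform m A oneA (ind s) = 0
    unfold Bform
    rw [hQone, hQadd]
    ring
  -- the representation identity
  have hkey : Q m A v = -(1/2) * ∑ s ∈ A', ∑ t ∈ A', Bst s t * (v s - v t) ^ 2 := by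
    have hper : ∀ s ∈ A', ∑ t ∈ A', Bst s t * (v s - v t) ^ 2 =
        (∑ t ∈ A', Bst s t * v t ^ 2) - 2 * v s * (∑ t ∈ A', v t * Bst s t) := by
      intro s hs
      have expand : ∀ t ∈ A', Bst s t * (v s - v t) ^ 2 =
          v s ^ 2 * Bst s t + (Bst s t * v t ^ 2 - 2 * v s * (v t * Bst s t)) := by
        intro t _; ring
      rw [Finset.sum_congr rfl expand, Finset.sum_add_distrib, ← Finset.mul_sum,
        hrow s hs, Finset.sum_sub_distrib, ← Finset.mul_sum]
      ring
    rw [Finset.sum_congr rfl hper, Finset.sum_sub_distrib]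
    have hT2 : ∑ s ∈ A', ∑ t ∈ A', Bst s t * v t ^ 2 = 0 := by
      rw [Finset.sum_comm]
      apply Finset.sum_eq_zero
      intro t ht
      have : ∀ s ∈ A', Bst s t * v t ^ 2 = v t ^ 2 * Bst t s := by
        intro s _
        show Bform m A (ind s) (ind t) * v t ^ 2 = v t ^ 2 * Bform m A (ind t) (ind s)
        rw [Bform_symm]; ring
      rw [Finset.sum_congr rfl this, ← Finset.mul_sum, hrow t ht, mul_zero]
    rw [hT2]
    have : ∑ s ∈ A', 2 * v s * ∑ t ∈ A', v t * Bst s t =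
        2 * ∑ s ∈ A', v s * ∑ t ∈ A', v t * Bst s t := by
      rw [Finset.mul_sum]
      apply Finset.sum_congr rfl
      intro s _; ring
    rw [this, ← hQv]
    ring
  -- drop all terms except the (x,y) ones
  have hdrop : Q m A v ≥ -Bst x y := by
    rw [hkey, ← Finset.sum_product']
    set g : (ℝ × ℝ) × (ℝ × ℝ) → ℝ := fun p => -Bst p.1 p.2 * (v p.1 - v p.2) ^ 2 with hg_def
    have hflip : -(1/2) * ∑ p ∈ A' ×ˢ A', Bst p.1 p.2 * (v p.1 - v p.2) ^ 2 =
        (1/2) * ∑ p ∈ A' ×ˢ A', g p := by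
      have : ∀ p ∈ A' ×ˢ A', g p = -(Bst p.1 p.2 * (v p.1 - v p.2) ^ 2) := by
        intro p _; rw [hg_def]; ring
      rw [Finset.sum_congr rfl this, Finset.sum_neg_distrib]
      ring
    have hg : ∀ p ∈ A' ×ˢ A', 0 ≤ g p := by
      intro p hp
      rw [Finset.mem_product] at hp
      by_cases hpe : p.1 = p.2
      · rw [hg_def]; simp only [hpe]; simp
      · rw [hg_def]
        apply mul_nonneg
        · rw [neg_nonneg]
          exact Bform_ind_nonpos m A (hfin.mem_toFinset.mp hp.1)
            (hfin.mem_toFinset.mp hp.2) hpe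
        · positivity
    have hsubset : ({((x : ℝ × ℝ), (y : ℝ × ℝ)), ((y : ℝ × ℝ), (x : ℝ × ℝ))} : Finset ((ℝ × ℝ) × (ℝ × ℝ))) ⊆ A' ×ˢ A' := by
      intro p hp
      rw [Finset.mem_insert, Finset.mem_singleton] at hp
      rw [Finset.mem_product]
      rcases hp with rfl | rfl
      · exact ⟨hx', hy'⟩
      · exact ⟨hy', hx'⟩
    have hnotmem : ((x : ℝ × ℝ), (y : ℝ × ℝ)) ∉ ({((y : ℝ × ℝ), (x : ℝ × ℝ))} : Finset ((ℝ × ℝ) × (ℝ × ℝ))) := by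
      rw [Finset.mem_singleton]
      intro hcon
      rw [Prod.mk.injEq] at hcon
      exact hxy hcon.1
    have hpair : ∑ p ∈ ({((x : ℝ × ℝ), (y : ℝ × ℝ)), ((y : ℝ × ℝ), (x : ℝ × ℝ))} : Finset ((ℝ × ℝ) × (ℝ × ℝ))), g p = 2 * (-Bst x y) := by
      rw [Finset.sum_insert hnotmem, Finset.sum_singleton, hg_def]
      simp only [hvx, hvy]
      have hsymm : Bst y x = Bst x y := Bform_symm m A (ind y) (ind x)
      rw [hsymm]
      ring
    have hge : ∑ p ∈ ({((x : ℝ × ℝ), (y : ℝ × ℝ)), ((y : ℝ × ℝ), (x : ℝ × ℝ))} : Finset ((ℝ × ℝ) × (ℝ × ℝ))), g p ≤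
        ∑ p ∈ A' ×ˢ A', g p :=
      Finset.sum_le_sum_of_subset_of_nonneg hsubset (fun p hp _ => hg p hp)
    rw [hflip]
    rw [hpair] at hge
    linarith
  have hcond : cond m A x y = -Bst x y := by
    show cond m A x y = -Bform m A (ind x) (ind y)
    unfold cond Bform
    ring
  rw [hcond]
  exact hdrop
/-! ### The lower bound -/

lemma edgeVal_minmax (a b : ℝ × ℝ → ℝ) (e : Sym2 (ℝ × ℝ)) :
    edgeVal (fun t => max (a t) (b t)) e + edgeVal (fun t => min (a t) (b t)) e ≤
      edgeVal a e + edgeVal b e := by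
  induction e using Sym2.ind with
  | _ p r =>
    simp only [edgeVal_mk]
    rcases le_total (a p) (b p) with h1 | h1 <;> rcases le_total (a r) (b r) with h2 | h2 <;>
      simp [max_eq_right, max_eq_left, min_eq_left, min_eq_right, h1, h2] <;> nlinarith

lemma cond_lower (m : ℕ) (A : Set (ℝ × ℝ)) {x y : ℝ × ℝ}
    (hx : x ∈ A) (hy : y ∈ A) (hnb : Nbr m x y) :
    (5 / 3 : ℝ) ^ m ≤ cond m A x y := by
  have hxy : x ≠ y := hnb.1
  have he0 : s(x, y) ∈ ES m := isEdge_iff.mp ⟨x, y, hnb, rfl⟩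
  have key : 2 * (5 / 3 : ℝ) ^ m ≤
      Q m A (ind x) + Q m A (ind y) - Q m A (ind x + ind y) := by
    have h2 : Q m A (ind x + ind y) + 2 * (5 / 3 : ℝ) ^ m ≤
        Q m A (ind x) + Q m A (ind y) := by
      apply le_of_forall_pos_le_add
      intro ε hε
      obtain ⟨a, ha, hEa⟩ := Q_exists_near m A (ind x) (by positivity : (0:ℝ) < ε/2)
      obtain ⟨b, hb, hEb⟩ := Q_exists_near m A (ind y) (by positivity : (0:ℝ) < ε/2)
      have hax : a x = 1 := by rw [ha x hx]; simp [ind]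
      have hay : a y = 0 := by rw [ha y hy]; simp [ind, Ne.symm hxy]
      have hbx : b x = 0 := by rw [hb x hx]; simp [ind, hxy]
      have hby : b y = 1 := by rw [hb y hy]; simp [ind]
      -- the max function is admissible for ind x + ind y
      have hadm : ∀ p ∈ A, (fun r => max (a r) (b r)) p = (ind x + ind y) p := by
        intro p hp
        have h1 : a p = ind x p := ha p hp
        have h2 : b p = ind y p := hb p hp
        simp only [Pi.add_apply, h1, h2, ind]
        by_cases hps : p = x
        · subst hps; rw [if_pos rfl, if_neg hxy]; norm_num
        · rw [if_neg hps]
          by_cases hpt : p = y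
          · subst hpt; rw [if_pos rfl]; norm_num
          · rw [if_neg hpt]; norm_num
      have hQmax : Q m A (ind x + ind y) ≤ Energy m (fun r => max (a r) (b r)) :=
        Q_le_energy m A _ _ hadm
      have hmin : 0 ≤ Energy m (fun r => min (a r) (b r)) := Energy_nonneg m _
      -- the slack estimate at the edge s(x,y)
      have hslack : Energy m (fun r => max (a r) (b r)) + Energy m (fun r => min (a r) (b r)) +
          2 * (5 / 3 : ℝ) ^ m ≤ Energy m a + Energy m b := by
        simp only [Energy_eq]
        have hsum : ∑ e ∈ ES m, edgeVal (fun r => max (a r) (b r)) e +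
            ∑ e ∈ ES m, edgeVal (fun r => min (a r) (b r)) e + 2 ≤
            ∑ e ∈ ES m, edgeVal a e + ∑ e ∈ ES m, edgeVal b e := by
          rw [← Finset.add_sum_erase _ _ he0, ← Finset.add_sum_erase _ _ he0,
            ← Finset.add_sum_erase _ _ he0, ← Finset.add_sum_erase _ _ he0]
          have hrest : ∑ e ∈ (ES m).erase s(x,y), edgeVal (fun r => max (a r) (b r)) e +
              ∑ e ∈ (ES m).erase s(x,y), edgeVal (fun r => min (a r) (b r)) e ≤
              ∑ e ∈ (ES m).erase s(x,y), edgeVal a e +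
              ∑ e ∈ (ES m).erase s(x,y), edgeVal b e := by
            rw [← Finset.sum_add_distrib, ← Finset.sum_add_distrib]
            exact Finset.sum_le_sum (fun e _ => edgeVal_minmax a b e)
          have hato : edgeVal (fun r => max (a r) (b r)) s(x,y) = 0 := by
            simp [edgeVal_mk, hax, hay, hbx, hby]
          have hato2 : edgeVal (fun r => min (a r) (b r)) s(x,y) = 0 := by
            simp [edgeVal_mk, hax, hay, hbx, hby]
          have hae : edgeVal a s(x,y) = 1 := by simp [edgeVal_mk, hax, hay]
          have hbe : edgeVal b s(x,y) = 1 := by simp [edgeVal_mk, hbx, hby]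
          rw [hato, hato2, hae, hbe]
          linarith
        have hK := Kpos m
        nlinarith [hsum]
      linarith
    linarith
  unfold cond
  linarith

/-! ### The degree bound and the upper bound -/

lemma mem_V_iff {m : ℕ} {x : ℝ × ℝ} :
    x ∈ V m ↔ ∃ b ∈ baseFinset m, ∃ i : Fin 3, x = Pt m (b + vv i) := by
  constructor
  · rintro ⟨w, hw, i, rfl⟩
    exact ⟨base w, mem_baseFinset.mpr ⟨w, hw, rfl⟩, i, by rw [Fword_q_eq, hw]⟩
  · rintro ⟨b, hb, i, rfl⟩
    obtain ⟨w, hw, rfl⟩ := mem_baseFinset.mp hb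
    exact ⟨w, hw, i, by rw [Fword_q_eq, hw]⟩

lemma V_finite (m : ℕ) : (V m).Finite := by
  classical
  apply Set.Finite.subset
    (((baseFinset m) ×ˢ (Finset.univ : Finset (Fin 3))).image
      (fun bi => Pt m (bi.1 + vv bi.2))).finite_toSet
  intro x hx
  obtain ⟨b, hb, i, rfl⟩ := mem_V_iff.mp hx
  simp only [Finset.coe_image, Set.mem_image, Finset.mem_coe]
  exact ⟨(b, i), by simp [Finset.mem_product, hb], rfl⟩

lemma deg_bound (m : ℕ) {x : ℝ × ℝ} (hxV : x ∈ V m) :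
    ∑ e ∈ ES m, edgeVal (ind x) e ≤ 4 := by
  classical
  obtain ⟨p0, hp0, i0, hx0⟩ := mem_V_iff.mp hxV
  set p : ℕ × ℕ := p0 + vv i0 with hp
  have hxPt : x = Pt m p := hx0
  obtain ⟨c1, c2, hc⟩ := two_cells m p
  set Z : Finset (ℝ × ℝ) :=
    ((Finset.univ.erase c1.2).image (fun j => Pt m (c1.1 + vv j))) ∪
    ((Finset.univ.erase c2.2).image (fun j => Pt m (c2.1 + vv j))) with hZ
  have hZcard : Z.card ≤ 4 := by
    apply le_trans (Finset.card_union_le _ _)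
    have h1 : ((Finset.univ.erase c1.2).image (fun j => Pt m (c1.1 + vv j))).card ≤ 2 := by
      apply le_trans Finset.card_image_le
      rw [Finset.card_erase_of_mem (Finset.mem_univ _)]
      simp
    have h2 : ((Finset.univ.erase c2.2).image (fun j => Pt m (c2.1 + vv j))).card ≤ 2 := by
      apply le_trans Finset.card_image_le
      rw [Finset.card_erase_of_mem (Finset.mem_univ _)]
      simp
    omega
  set T : Finset (Sym2 (ℝ × ℝ)) := (ES m).filter (fun e => edgeVal (ind x) e ≠ 0) with hT
  have hsub : T ⊆ Z.image (fun z => s(x, z)) := by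
    intro e he
    rw [hT, Finset.mem_filter] at he
    obtain ⟨heES, hne⟩ := he
    obtain ⟨b, hb, i, j, hij, rfl⟩ := mem_ES.mp heES
    by_cases h1 : Pt m (b + vv i) = x <;> by_cases h2 : Pt m (b + vv j) = x
    · exfalso
      have : b + vv i = b + vv j := Pt_inj m (h1.trans h2.symm)
      exact hij (vv_inj (add_left_cancel this))
    · have hbi : b + vv i = p := Pt_inj m (h1.trans hxPt)
      rw [Finset.mem_image]
      refine ⟨Pt m (b + vv j), ?_, by rw [h1]⟩
      rcases hc b i hb hbi with hcc | hcc <;> rw [Prod.mk.injEq] at hcc <;>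
        obtain ⟨hb1, hi1⟩ := hcc
      · rw [hZ, Finset.mem_union]
        left
        rw [Finset.mem_image]
        exact ⟨j, Finset.mem_erase.mpr ⟨by rw [← hi1]; exact (Ne.symm hij), Finset.mem_univ j⟩,
          by rw [hb1]⟩
      · rw [hZ, Finset.mem_union]
        right
        rw [Finset.mem_image]
        exact ⟨j, Finset.mem_erase.mpr ⟨by rw [← hi1]; exact (Ne.symm hij), Finset.mem_univ j⟩,
          by rw [hb1]⟩
    · have hbj : b + vv j = p := Pt_inj m (h2.trans hxPt)
      rw [Finset.mem_image]
      refine ⟨Pt m (b + vv i), ?_, by rw [h2, Sym2.eq_swap]⟩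
      rcases hc b j hb hbj with hcc | hcc <;> rw [Prod.mk.injEq] at hcc <;>
        obtain ⟨hb1, hi1⟩ := hcc
      · rw [hZ, Finset.mem_union]
        left
        rw [Finset.mem_image]
        exact ⟨i, Finset.mem_erase.mpr ⟨by rw [← hi1]; exact hij, Finset.mem_univ i⟩,
          by rw [hb1]⟩
      · rw [hZ, Finset.mem_union]
        right
        rw [Finset.mem_image]
        exact ⟨i, Finset.mem_erase.mpr ⟨by rw [← hi1]; exact hij, Finset.mem_univ i⟩,
          by rw [hb1]⟩
    · exfalso
      apply hne
      simp [edgeVal_mk, ind, h1, h2]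
  have hcard : T.card ≤ 4 :=
    le_trans (Finset.card_le_card hsub) (le_trans Finset.card_image_le hZcard)
  have hle1 : ∀ e ∈ T, edgeVal (ind x) e ≤ 1 := by
    intro e _
    induction e using Sym2.ind with
    | _ a b =>
      simp only [edgeVal_mk, ind]
      split_ifs <;> norm_num
  calc ∑ e ∈ ES m, edgeVal (ind x) e
      = ∑ e ∈ T, edgeVal (ind x) e := (Finset.sum_filter_ne_zero (ES m)).symm
    _ ≤ ∑ _e ∈ T, (1:ℝ) := Finset.sum_le_sum hle1
    _ = (T.card : ℝ) := by simp
    _ ≤ 4 := by exact_mod_cast hcard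

lemma Q_pair_sum_zero (m : ℕ) {x y : ℝ × ℝ} (hxy : x ≠ y) :
    Q m {x, y} (ind x + ind y) = 0 := by
  apply le_antisymm
  · have hadm : ∀ p ∈ ({x, y} : Set (ℝ × ℝ)), (fun _ => (1:ℝ)) p = (ind x + ind y) p := by
      intro p hp
      rcases hp with rfl | rfl
      · simp [ind, Pi.add_apply, hxy]
      · simp [ind, Pi.add_apply, Ne.symm hxy]
    have := Q_le_energy m {x, y} (ind x + ind y) (fun _ => 1) hadm
    rwa [Energy_const] at this
  · exact Q_nonneg m _ _

lemma cond_pair_upper (m : ℕ) {x y : ℝ × ℝ} (hnb : Nbr m x y) :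
    cond m {x, y} x y ≤ 4 * (5 / 3 : ℝ) ^ m := by
  have hxy : x ≠ y := hnb.1
  obtain ⟨_, w, hw, ⟨i, hxw⟩, ⟨j, hyw⟩⟩ := hnb
  have hxV : x ∈ V m := ⟨w, hw, i, hxw⟩
  have hyV : y ∈ V m := ⟨w, hw, j, hyw⟩
  have hKp := Kpos m
  have hQx : Q m {x, y} (ind x) ≤ 4 * (5 / 3 : ℝ) ^ m := by
    have h1 : Q m {x, y} (ind x) ≤ Energy m (ind x) :=
      Q_le_energy m {x, y} (ind x) (ind x) (fun _ _ => rfl)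
    have h2 : Energy m (ind x) ≤ (5 / 3 : ℝ) ^ m * 4 := by
      rw [Energy_eq]
      exact mul_le_mul_of_nonneg_left (deg_bound m hxV) (le_of_lt hKp)
    linarith
  have hQy : Q m {x, y} (ind y) ≤ 4 * (5 / 3 : ℝ) ^ m := by
    have h1 : Q m {x, y} (ind y) ≤ Energy m (ind y) :=
      Q_le_energy m {x, y} (ind y) (ind y) (fun _ _ => rfl)
    have h2 : Energy m (ind y) ≤ (5 / 3 : ℝ) ^ m * 4 := by
      rw [Energy_eq]
      exact mul_le_mul_of_nonneg_left (deg_bound m hyV) (le_of_lt hKp)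
    linarith
  unfold cond
  rw [Q_pair_sum_zero m hxy]
  linarith


/-- For `A ⊆ V_m` and `m`-neighbors `x, y ∈ A`:
`(5/3)^m ≤ c^A_{x,y} ≤ c^{{x,y}}_{x,y} ≤ 4·(5/3)^m`, where `c^{{x,y}}_{x,y}` is the
conductance of the two-point set `{x, y}` (the reciprocal of the effective resistance). -/
theorem stmt2 (m : ℕ) (A : Set (ℝ × ℝ)) (hA : A ⊆ V m)
    (x y : ℝ × ℝ) (hx : x ∈ A) (hy : y ∈ A) (hnb : Nbr m x y) :
    (5 / 3 : ℝ) ^ m ≤ cond m A x y ∧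
    cond m A x y ≤ cond m {x, y} x y ∧
    cond m {x, y} x y ≤ 4 * (5 / 3 : ℝ) ^ m := by
  have hxy : x ≠ y := hnb.1
  have hfin : A.Finite := (V_finite m).subset hA
  refine ⟨cond_lower m A hx hy hnb, ?_, cond_pair_upper m hnb⟩
  -- middle inequality
  have hmx : x ∈ ({x, y} : Set (ℝ × ℝ)) := Set.mem_insert x {y}
  have hmy : y ∈ ({x, y} : Set (ℝ × ℝ)) := Set.mem_insert_of_mem x rfl
  have h2x : cond m A x y ≤ Q m {x, y} (ind x) := by
    apply Q_ge_of_forall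
    intro u hu
    have hux : u x = 1 := by rw [hu x hmx]; simp [ind]
    have huy : u y = 0 := by rw [hu y hmy]; simp [ind, Ne.symm hxy]
    have hQu : Q m A u ≤ Energy m u := Q_le_energy m A u u (fun _ _ => rfl)
    have := cond_le_Q m A hfin hx hy hxy u hux huy
    linarith
  have hcomm : cond m A x y = cond m A y x := by
    unfold cond
    have : ind y + ind x = ind x + ind y := add_comm _ _
    rw [this]
    ring
  have h2y : cond m A x y ≤ Q m {x, y} (ind y) := by
    rw [hcomm]
    apply Q_ge_of_forall
    intro u hu
    have hux : u x = 0 := by rw [hu x hmx]; simp [ind, hxy]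
    have huy : u y = 1 := by rw [hu y hmy]; simp [ind]
    have hQu : Q m A u ≤ Energy m u := Q_le_energy m A u u (fun _ _ => rfl)
    have := cond_le_Q m A hfin hy hx (Ne.symm hxy) u huy hux
    linarith
  unfold cond
  rw [Q_pair_sum_zero m hxy]
  unfold cond at h2x h2y
  linarith [h2x, h2y]


end SGPaper
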